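/- Let k ≥ 3 be fixed and let n be sufficiently large. Suppose d < n and x₁, …, x_{k−1} are nonnegative integers with Σ_{i=1}^{k−1} x_i = n. If Σ_{1 ≤ i < j ≤ k−1} x_i x_j ≥ t_{k−1}(n) − d, then ⌊n/(k−1)⌋ − d ≤ x_i ≤ ⌈n/(k−1)⌉ + d for all i ∈ [k−1]. -/

import Mathlib

open Finset SimpleGraph

/-- Number of `k`-cliques of a graph. -/
noncomputable def cliqueCount {V : Type*} (G : SimpleGraph V) (k : ℕ) : ℕ :=
  Nat.card {T : Finset V // G.IsNClique k T}

/-- `K_k`-covering number: minimum size of a vertex set meeting every `k`-clique. -/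
noncomputable def cliqueCover {V : Type*} [Fintype V] [DecidableEq V]
    (G : SimpleGraph V) (k : ℕ) : ℕ :=
  sInf {m | ∃ S : Finset V, S.card = m ∧ ∀ T : Finset V, G.IsNClique k T → ∃ v ∈ T, v ∈ S}

/-- Number of edges of a graph. -/
noncomputable def edgeCount {V : Type*} (G : SimpleGraph V) : ℕ := Nat.card G.edgeSet

/-- Number of edges of the Turán graph `T_r(n)`. -/
noncomputable def turanEdges (r n : ℕ) : ℕ := edgeCount (turanGraph n r)

/-- `e(n) = n² - 4⌊n²/4⌋`. -/
def eDef (n : ℕ) : ℕ := n ^ 2 - 4 * (n ^ 2 / 4)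

/-- `m_{s,t}(n)`: least `m` such that `4s - 4t - 4m + e(n)` is a perfect square. -/
noncomputable def mst (s t n : ℕ) : ℕ :=
  sInf {m : ℕ | ∃ p : ℕ, (p : ℤ) ^ 2 = 4 * s - 4 * t - 4 * m + eDef n}

/-- `R₃(n,s,t) = (4s - 4t - 4m_{s,t}(n) + e(n))^{1/2}`. -/
noncomputable def R3 (s t n : ℕ) : ℕ :=
  Nat.sqrt (4 * (s : ℤ) - 4 * t - 4 * mst s t n + eDef n).toNat

/-- Number of copies of `F` in `G`: subgraphs of `G` isomorphic to `F`. -/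
noncomputable def copyCount {α V : Type*} (F : SimpleGraph α) (G : SimpleGraph V) : ℕ :=
  Nat.card {H : G.Subgraph // Nonempty (F ≃g H.coe)}

/-- `F`-covering number of `G`. -/
noncomputable def coverNumber {α V : Type*} [Fintype V] [DecidableEq V]
    (F : SimpleGraph α) (G : SimpleGraph V) : ℕ :=
  sInf {m | ∃ S : Finset V, S.card = m ∧
    ∀ H : G.Subgraph, Nonempty (F ≃g H.coe) → ∃ v ∈ H.verts, v ∈ S}

/-- A graph `F` is `k`-critical. -/
def IsCritical {α : Type*} (k : ℕ) (F : SimpleGraph α) : Prop :=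
  F.chromaticNumber = k ∧ ∃ e ∈ F.edgeSet, (F.deleteEdges {e}).chromaticNumber < k

/-- `c(n,F)`: minimum number of copies of `F` after adding one new edge to `T_{k-1}(n)`. -/
noncomputable def cnF {α : Type*} (k n : ℕ) (F : SimpleGraph α) : ℕ :=
  sInf {c | ∃ u v : Fin n, u ≠ v ∧ ¬ (turanGraph n (k - 1)).Adj u v ∧
    c = copyCount F (turanGraph n (k - 1) ⊔ fromEdgeSet {s(u, v)})}

/-- `N_k(n,s)` from Theorem 1.3. -/
def NkBound (k s n : ℕ) : ℕ :=
  if n % (k - 1) = 0 then s * (n / (k - 1)) ^ (k - 3) * (n / (k - 1) - 1)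
  else if n % (k - 1) = 1 then s * (n / (k - 1)) ^ (k - 2) - (n / (k - 1)) ^ (k - 3)
  else s * (n / (k - 1) + 1) ^ (n % (k - 1) - 2) * (n / (k - 1)) ^ (k - n % (k - 1))

/-- `R_k(n,s,t)`. -/
noncomputable def Rk (k s t n : ℕ) : ℝ :=
  Real.sqrt ((2 * ((k : ℝ) - 1) * ((s : ℝ) - t) +
    ((k : ℝ) - 1 - (n % (k - 1) : ℕ)) * (n % (k - 1) : ℕ)) / ((k : ℝ) - 2))

/-- `c(x₁,…,x_{k-1},F)`: copies of `F` in the complete multipartite graph with parts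
`Fin (x i)` plus one edge inside part `0`. -/
noncomputable def cParts {α : Type*} (k : ℕ) (x : Fin (k - 1) → ℕ) (F : SimpleGraph α) : ℕ :=
  sInf {c | ∃ i₀ : Fin (k - 1), ∃ a b : Fin (x i₀), (i₀ : ℕ) = 0 ∧ a ≠ b ∧
    c = copyCount F (completeMultipartiteGraph (fun i => Fin (x i)) ⊔
      fromEdgeSet {s(⟨i₀, a⟩, ⟨i₀, b⟩)})}


/-- Sum of squares of balanced part sizes: `q*n + (q+1)*s` with `q = n/r`, `s = n%r`. -/
def Bval (r n : ℕ) : ℕ := n / r * n + (n / r + 1) * (n % r)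

lemma aux_div (r a b : ℕ) (hr : 0 < r) (hb : b < r) :
    (r * a + b) / r = a ∧ (r * a + b) % r = b := by
  constructor
  · rw [Nat.mul_add_div hr, Nat.div_eq_of_lt hb, add_zero]
  · rw [Nat.mul_add_mod, Nat.mod_eq_of_lt hb]

lemma cnt_formula (r : ℕ) (hr : 0 < r) (n j : ℕ) (hj : j < r) :
    #((Finset.range n).filter (fun v => v % r = j)) =
      n / r + if j < n % r then 1 else 0 := by
  induction n with
  | zero => simp
  | succ n ih =>
    rw [Finset.range_add_one, Finset.filter_insert]
    have hmod : n % r < r := Nat.mod_lt n hr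
    have hdm : r * (n / r) + n % r = n := Nat.div_add_mod n r
    by_cases hc : n % r + 1 = r
    · have h1 : n + 1 = r * (n / r + 1) + 0 := by rw [Nat.mul_add, mul_one]; omega
      have h2 := aux_div r (n / r + 1) 0 hr hr
      rw [← h1] at h2
      by_cases hc2 : n % r = j
      · rw [if_pos hc2, Finset.card_insert_of_notMem (by simp), ih, h2.1, h2.2]
        all_goals split_ifs <;> omega
      · rw [if_neg hc2, ih, h2.1, h2.2]
        all_goals split_ifs <;> omega
    · have h1 : n + 1 = r * (n / r) + (n % r + 1) := by omega
      have h2 := aux_div r (n / r) (n % r + 1) hr (by omega)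
      rw [← h1] at h2
      by_cases hc2 : n % r = j
      · rw [if_pos hc2, Finset.card_insert_of_notMem (by simp), ih, h2.1, h2.2]
        all_goals split_ifs <;> omega
      · rw [if_neg hc2, ih, h2.1, h2.2]
        all_goals split_ifs <;> omega

lemma sum_ite_sq (r q s : ℕ) (hs : s ≤ r) :
    ∑ j ∈ Finset.range r, ((q + if j < s then 1 else 0) * (q + if j < s then 1 else 0))
      = q * (r * q + s) + (q + 1) * s := by
  have h1 : ∀ j ∈ Finset.range r,
      (q + if j < s then 1 else 0) * (q + if j < s then 1 else 0)
        = q * q + (2 * q + 1) * (if j < s then 1 else 0) := by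
    intro j _; split_ifs <;> ring
  have h2 : ∑ j ∈ Finset.range r, (if j < s then (1 : ℕ) else 0) = s := by
    rw [← Finset.card_filter]
    have h3 : (Finset.range r).filter (fun j => j < s) = Finset.range s := by
      ext j; simp only [Finset.mem_filter, Finset.mem_range]; omega
    rw [h3, Finset.card_range]
  rw [Finset.sum_congr rfl h1, Finset.sum_add_distrib, Finset.sum_const, ← Finset.mul_sum,
    h2, Finset.card_range, smul_eq_mul]
  ring

lemma sum_cnt_sq (r n : ℕ) (hr : 0 < r) :
    ∑ j ∈ Finset.range r, ((n / r + if j < n % r then 1 else 0) *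
      (n / r + if j < n % r then 1 else 0)) = Bval r n := by
  have h := sum_ite_sq r (n / r) (n % r) (le_of_lt (Nat.mod_lt n hr))
  rw [Nat.div_add_mod] at h
  rw [h]
  rfl

lemma balanced_case (r : ℕ) (hr : 0 < r) (x : Fin r → ℕ) (hbal : ∀ a b, x a ≤ x b + 1) :
    (∑ i, x i * x i = Bval r (∑ i, x i)) ∧
      ∀ i, (∑ j, x j) / r ≤ x i ∧ x i ≤ ((∑ j, x j) + r - 1) / r := by
  have hne : (Finset.univ : Finset (Fin r)).Nonempty := ⟨⟨0, hr⟩, Finset.mem_univ _⟩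
  obtain ⟨i₀, -, hmin⟩ := Finset.exists_min_image Finset.univ x hne
  set m := x i₀ with hm
  have hx : ∀ i, x i = m ∨ x i = m + 1 := by
    intro i
    have h1 := hmin i (Finset.mem_univ i)
    have h2 := hbal i i₀
    omega
  set t := #(Finset.univ.filter fun i => x i = m + 1) with hts
  have ht : t < r := by
    have hsub : (Finset.univ.filter fun i => x i = m + 1) ⊆ Finset.univ.erase i₀ := by
      intro i hi
      rw [Finset.mem_filter] at hi
      rw [Finset.mem_erase]
      exact ⟨fun h => by rw [h] at hi; omega, Finset.mem_univ _⟩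
    have h1 := Finset.card_le_card hsub
    rw [Finset.card_erase_of_mem (Finset.mem_univ _), Finset.card_univ, Fintype.card_fin] at h1
    omega
  have hboole : ∑ i, (if x i = m + 1 then (1 : ℕ) else 0) = t := by
    rw [hts, Finset.card_filter]
  have hsum : ∑ i, x i = r * m + t := by
    have h1 : ∀ i ∈ Finset.univ, x i = m + (if x i = m + 1 then 1 else 0) := by
      intro i _
      rcases hx i with h | h
      · rw [h, if_neg (by omega : ¬ (m = m + 1))]
        omega
      · rw [h, if_pos rfl]
    rw [Finset.sum_congr rfl h1, Finset.sum_add_distrib, Finset.sum_const, Finset.card_univ,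
      Fintype.card_fin, hboole, smul_eq_mul]
  have hdm := aux_div r m t hr ht
  rw [← hsum] at hdm
  have hsq : ∑ i, x i * x i = r * (m * m) + (2 * m + 1) * t := by
    have h1 : ∀ i ∈ Finset.univ, x i * x i
        = m * m + (2 * m + 1) * (if x i = m + 1 then 1 else 0) := by
      intro i _
      rcases hx i with h | h
      · rw [h, if_neg (by omega : ¬ (m = m + 1))]; ring
      · rw [h, if_pos rfl]; ring
    rw [Finset.sum_congr rfl h1, Finset.sum_add_distrib, Finset.sum_const, Finset.card_univ,
      Fintype.card_fin, ← Finset.mul_sum, hboole, smul_eq_mul]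
  refine ⟨by rw [hsq, Bval, hdm.1, hdm.2, hsum]; ring, fun i => ?_⟩
  constructor
  · rw [hdm.1]; exact hmin i (Finset.mem_univ i)
  · by_cases ht0 : t = 0
    · have hxi : x i = m := by
        rcases hx i with h | h
        · exact h
        · exfalso
          have hmem : i ∈ Finset.univ.filter (fun i => x i = m + 1) :=
            Finset.mem_filter.mpr ⟨Finset.mem_univ _, h⟩
          have h2 := Finset.card_pos.mpr ⟨i, hmem⟩
          omega
      have h1 : (∑ j, x j) + r - 1 = r * m + (r - 1) := by
        rw [hsum]; omega
      rw [hxi, h1, (aux_div r m (r - 1) hr (by omega)).1]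
    · have h1 : (∑ j, x j) + r - 1 = r * (m + 1) + (t - 1) := by
        rw [hsum, Nat.mul_add, mul_one]; omega
      rw [h1, (aux_div r (m + 1) (t - 1) hr (by omega)).1]
      rcases hx i with h | h <;> omega

lemma key_lemma (r : ℕ) (hr : 0 < r) :
    ∀ W : ℕ, ∀ x : Fin r → ℕ, ∑ i, x i * x i = W → ∀ i : Fin r,
      2 * ((x i : ℤ) - (((∑ j, x j) + r - 1) / r : ℕ)) ≤ (W : ℤ) - (Bval r (∑ j, x j) : ℤ) ∧
      2 * ((((∑ j, x j) / r : ℕ) : ℤ) - (x i : ℤ)) ≤ (W : ℤ) - (Bval r (∑ j, x j) : ℤ) := by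
  intro W
  induction W using Nat.strong_induction_on with
  | _ W ih =>
    intro x hW i
    by_cases hbal : ∀ a b, x a ≤ x b + 1
    · obtain ⟨hsq, hbd⟩ := balanced_case r hr x hbal
      obtain ⟨h1, h2⟩ := hbd i
      rw [← hW, hsq]
      omega
    · push_neg at hbal
      obtain ⟨a, b, hab⟩ := hbal
      have hne : b ≠ a := by rintro rfl; omega
      set x' : Fin r → ℕ := fun j => if j = a then x a - 1 else if j = b then x b + 1 else x j
        with hx'
      have hxa : x' a = x a - 1 := by simp [hx']
      have hxb : x' b = x b + 1 := by simp [hx', hne]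
      have hother : ∀ j, j ≠ a → j ≠ b → x' j = x j := by
        intro j h1 h2; simp [hx', h1, h2]
      set rest := (Finset.univ.erase a).erase b with hrest
      have split : ∀ (g : Fin r → ℤ), ∑ j, g j = g a + g b + ∑ j ∈ rest, g j := by
        intro g
        rw [← Finset.sum_erase_add _ _ (Finset.mem_univ a),
          ← Finset.sum_erase_add _ _ (Finset.mem_erase.mpr ⟨hne, Finset.mem_univ b⟩), hrest]
        ring
      have hrmem : ∀ j ∈ rest, x' j = x j := by
        intro j hj
        rw [hrest, Finset.mem_erase] at hj
        obtain ⟨hjb, hj2⟩ := hj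
        rw [Finset.mem_erase] at hj2
        exact hother j hj2.1 hjb
      have hcast : ((x a - 1 : ℕ) : ℤ) = (x a : ℤ) - 1 := by omega
      have hsum' : ∑ j, x' j = ∑ j, x j := by
        have h1 : (∑ j, (x' j : ℤ)) = (x' a : ℤ) + (x' b : ℤ) + ∑ j ∈ rest, (x' j : ℤ) :=
          split _
        have h2 : (∑ j, (x j : ℤ)) = (x a : ℤ) + (x b : ℤ) + ∑ j ∈ rest, (x j : ℤ) :=
          split _
        have h3 : (∑ j ∈ rest, (x' j : ℤ)) = ∑ j ∈ rest, (x j : ℤ) :=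
          Finset.sum_congr rfl fun j hj => by rw [hrmem j hj]
        have h4 : (↑(∑ j, x' j) : ℤ) = ↑(∑ j, x j) := by
          push_cast
          rw [h1, h2, h3, hxa, hxb, hcast]
          push_cast
          ring
        exact_mod_cast h4
      have hWc : (∑ j, ((x j : ℤ) * (x j : ℤ))) = (W : ℤ) := by
        rw [← hW]; push_cast; ring
      have hsqZ : (↑(∑ j, x' j * x' j) : ℤ) = ↑W + 2 * ((x b : ℤ) + 1 - (x a : ℤ)) := by
        have h1 : (∑ j, ((x' j : ℤ) * (x' j : ℤ)))
            = (x' a : ℤ) * (x' a : ℤ) + (x' b : ℤ) * (x' b : ℤ)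
              + ∑ j ∈ rest, ((x' j : ℤ) * (x' j : ℤ)) := split _
        have h2 : (∑ j, ((x j : ℤ) * (x j : ℤ)))
            = (x a : ℤ) * (x a : ℤ) + (x b : ℤ) * (x b : ℤ)
              + ∑ j ∈ rest, ((x j : ℤ) * (x j : ℤ)) := split _
        have h3 : (∑ j ∈ rest, ((x' j : ℤ) * (x' j : ℤ)))
            = ∑ j ∈ rest, ((x j : ℤ) * (x j : ℤ)) :=
          Finset.sum_congr rfl fun j hj => by rw [hrmem j hj]
        rw [h2] at hWc
        calc (↑(∑ j, x' j * x' j) : ℤ)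
            = ∑ j, ((x' j : ℤ) * (x' j : ℤ)) := by push_cast; ring
          _ = (x' a : ℤ) * (x' a : ℤ) + (x' b : ℤ) * (x' b : ℤ)
              + ∑ j ∈ rest, ((x j : ℤ) * (x j : ℤ)) := by rw [h1, h3]
          _ = ↑W + 2 * ((x b : ℤ) + 1 - (x a : ℤ)) := by
              rw [hxa, hxb, hcast]
              push_cast
              linear_combination hWc
      have hlt : ∑ j, x' j * x' j < W := by omega
      obtain ⟨k1, k2⟩ := ih _ hlt x' rfl i
      rw [hsum'] at k1 k2
      have hbounds : x i ≤ x' i + 1 ∧ x' i ≤ x i + 1 := by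
        by_cases h1 : i = a
        · subst h1; rw [hxa]; omega
        · by_cases h2 : i = b
          · subst h2; rw [hxb]; omega
          · rw [hother i h1 h2]; omega
      omega

lemma turan_edges_eq (r n : ℕ) (hr : 0 < r) :
    2 * turanEdges r n + Bval r n = n * n := by
  classical
  have hE : turanEdges r n = #(turanGraph n r).edgeFinset := by
    rw [turanEdges, edgeCount, Nat.card_eq_fintype_card, SimpleGraph.edgeFinset_card]
  set cnt : ℕ → ℕ := fun j => #(Finset.univ.filter fun v : Fin n => (v : ℕ) % r = j) with hcnt
  have hdeg : ∀ v : Fin n, (turanGraph n r).degree v + cnt ((v : ℕ) % r) = n := by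
    intro v
    have hfe : (Finset.univ.filter fun w : Fin n => (turanGraph n r).Adj v w)
        = Finset.univ.filter fun w : Fin n => ¬ ((w : ℕ) % r = (v : ℕ) % r) := by
      ext w
      simp only [Finset.mem_filter]
      exact and_congr_right fun _ =>
        ⟨fun h h2 => h h2.symm, fun h h2 => h h2.symm⟩
    have hd : (turanGraph n r).degree v
        = #(Finset.univ.filter fun w : Fin n => ¬ ((w : ℕ) % r = (v : ℕ) % r)) := by
      simp only [SimpleGraph.degree, SimpleGraph.neighborFinset_eq_filter]
      rw [hfe]
    have hc := Finset.card_filter_add_card_filter_not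
      (s := (Finset.univ : Finset (Fin n))) (p := fun w : Fin n => (w : ℕ) % r = (v : ℕ) % r)
    rw [Finset.card_univ, Fintype.card_fin] at hc
    simp only [hcnt]
    omega
  have hfib : ∑ v : Fin n, cnt ((v : ℕ) % r) = ∑ j ∈ Finset.range r, cnt j * cnt j := by
    rw [← Finset.sum_fiberwise_of_maps_to (g := fun v : Fin n => (v : ℕ) % r)
      (t := Finset.range r) (fun v _ => Finset.mem_range.mpr (Nat.mod_lt _ hr))
      (fun v : Fin n => cnt ((v : ℕ) % r))]
    refine Finset.sum_congr rfl fun j hj => ?_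
    have h1 : ∀ v ∈ Finset.univ.filter fun v : Fin n => (v : ℕ) % r = j,
        cnt ((v : ℕ) % r) = cnt j := by
      intro v hv
      rw [(Finset.mem_filter.mp hv).2]
    rw [Finset.sum_congr rfl h1, Finset.sum_const, smul_eq_mul]
  have hcntval : ∀ j, j < r → cnt j = n / r + if j < n % r then 1 else 0 := by
    intro j hj
    have h1 : cnt j = #((Finset.range n).filter fun v => v % r = j) := by
      simp only [hcnt]
      rw [Finset.card_filter, Finset.card_filter,
        Fin.sum_univ_eq_sum_range (fun v => if v % r = j then 1 else 0) n]
    rw [h1]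
    exact cnt_formula r hr n j hj
  have hB : ∑ j ∈ Finset.range r, cnt j * cnt j = Bval r n := by
    rw [Finset.sum_congr rfl fun j hj => by
      rw [hcntval j (Finset.mem_range.mp hj)]]
    exact sum_cnt_sq r n hr
  have htot : (∑ v : Fin n, (turanGraph n r).degree v) + ∑ v : Fin n, cnt ((v : ℕ) % r)
      = n * n := by
    rw [← Finset.sum_add_distrib,
      (Finset.sum_congr rfl (fun v _ => hdeg v) : _ = ∑ _v : Fin n, n)]
    simp [mul_comm]
  have hsd := SimpleGraph.sum_degrees_eq_twice_card_edges (turanGraph n r)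
  omega

lemma sq_sum_general {ι : Type*} [LinearOrder ι] [DecidableEq ι] (s : Finset ι) (f : ι → ℤ) :
    (∑ i ∈ s, f i) * (∑ i ∈ s, f i)
      = (∑ i ∈ s, f i * f i)
        + 2 * ∑ i ∈ s, ∑ j ∈ s.filter (fun j => i < j), f i * f j := by
  induction s using Finset.induction_on_max with
  | empty => simp
  | insert a s ha ih =>
    have hna : a ∉ s := fun hmem => lt_irrefl a (ha a hmem)
    have hfa : (insert a s).filter (fun j => a < j) = ∅ := by
      rw [Finset.filter_insert, if_neg (lt_irrefl a)]
      rw [Finset.filter_eq_empty_iff]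
      intro b hb
      exact lt_asymm (ha b hb)
    have h2 : ∑ i ∈ s, ∑ j ∈ (insert a s).filter (fun j => i < j), f i * f j
        = ∑ i ∈ s, (f i * f a + ∑ j ∈ s.filter (fun j => i < j), f i * f j) := by
      refine Finset.sum_congr rfl fun i hi => ?_
      rw [Finset.filter_insert, if_pos (ha i hi),
        Finset.sum_insert (fun hmem => hna (Finset.mem_filter.mp hmem).1)]
    rw [Finset.sum_insert hna, Finset.sum_insert hna, Finset.sum_insert hna, hfa,
      Finset.sum_empty, h2, Finset.sum_add_distrib, ← Finset.sum_mul]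
    linear_combination ih

lemma sq_sum_identity (r : ℕ) (x : Fin r → ℕ) :
    (∑ i, (x i : ℤ)) * (∑ i, (x i : ℤ))
      = (∑ i, (x i : ℤ) * (x i : ℤ)) + 2 * ∑ i, ∑ j ∈ Finset.Ioi i, (x i : ℤ) * (x j : ℤ) := by
  have h := sq_sum_general (Finset.univ : Finset (Fin r)) (fun i => (x i : ℤ))
  have h1 : ∀ i : Fin r, (Finset.univ.filter (fun j => i < j)) = Finset.Ioi i := by
    intro i; ext j; simp
  have h2 : (∑ i : Fin r, ∑ j ∈ Finset.univ.filter (fun j => i < j), (x i : ℤ) * (x j : ℤ))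
      = ∑ i : Fin r, ∑ j ∈ Finset.Ioi i, (x i : ℤ) * (x j : ℤ) :=
    Finset.sum_congr rfl fun i _ => by rw [h1 i]
  rw [h2] at h
  exact h

/-- if `Σ_{i<j} x_i x_j ≥ t_{k-1}(n) - d`, then each `x_i` is within `d`
of `n/(k-1)`. -/
theorem stmt_13 (k : ℕ) (hk : 3 ≤ k) :
    ∃ n₀ : ℕ, ∀ n ≥ n₀, ∀ d : ℕ, d < n → ∀ x : Fin (k - 1) → ℕ,
      (∑ i, x i) = n →
      (turanEdges (k - 1) n : ℤ) - d ≤ ∑ i, ∑ j ∈ Finset.Ioi i, (x i : ℤ) * x j →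
      ∀ i, n / (k - 1) - d ≤ x i ∧ x i ≤ (n + k - 2) / (k - 1) + d := by
  refine ⟨1, fun n hn d hd x hsum hineq i => ?_⟩
  have hr0 : 0 < k - 1 := by omega
  obtain ⟨k1, k2⟩ := key_lemma (k - 1) hr0 (∑ j, x j * x j) x rfl i
  rw [hsum] at k1 k2
  have hT := turan_edges_eq (k - 1) n hr0
  have hid := sq_sum_identity (k - 1) x
  have hsZ : (∑ j, (x j : ℤ)) = (n : ℤ) := by
    rw [← hsum]; push_cast; ring
  rw [hsZ] at hid
  have e1 : ((∑ j, x j * x j : ℕ) : ℤ) = ∑ j, (x j : ℤ) * (x j : ℤ) := by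
    push_cast; ring
  have hTz : 2 * (turanEdges (k - 1) n : ℤ) + (Bval (k - 1) n : ℤ) = (n : ℤ) * (n : ℤ) := by
    exact_mod_cast hT
  have hS : ((∑ j, x j * x j : ℕ) : ℤ) ≤ (Bval (k - 1) n : ℤ) + 2 * (d : ℤ) := by
    rw [e1]; linarith
  have hup : (x i : ℤ) ≤ (((n + (k - 1) - 1) / (k - 1) : ℕ) : ℤ) + (d : ℤ) := by linarith
  have hlo : (((n / (k - 1) : ℕ)) : ℤ) ≤ (x i : ℤ) + (d : ℤ) := by linarith
  have hnum : n + k - 2 = n + (k - 1) - 1 := by omega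
  rw [hnum]
  exact ⟨by omega, by omega⟩
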